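/- Let (aᵢ)_{i≥1} be a nondecreasing sequence of positive reals with Σᵢ 1/aᵢ² < ∞, define μ(θ) = Σᵢ 1/(aᵢ²+2θ) and ψ(θ) = √(Σᵢ 2θ²/(aᵢ²+2θ)²) for θ > 0, let μ⁻¹ be the inverse of μ, and set ρ(s) = 1/μ⁻¹(s). Then for every x ∈ ℝ, ψ(μ⁻¹(s)) / ψ(μ⁻¹(s + x·ρ(s))) → 1 as s → 0⁺. -/

import Mathlib

open Filter Set Real

private lemma psiratio_sumMu {a : ℕ → ℝ} (hapos : ∀ i, 0 < a i)
    (hasum : Summable (fun i => 1 / (a i) ^ 2))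
    {θ : ℝ} (hθ : 0 < θ) : Summable (fun i => 1 / ((a i) ^ 2 + 2 * θ)) := by
  refine Summable.of_nonneg_of_le (fun i => by positivity) (fun i => ?_) hasum
  have h := hapos i
  exact one_div_le_one_div_of_le (by positivity) (by linarith)

private lemma psiratio_sumS {a : ℕ → ℝ} (hapos : ∀ i, 0 < a i)
    (hasum : Summable (fun i => 1 / (a i) ^ 2)) {θ : ℝ} (hθ : 0 < θ) :
    Summable (fun i => 2 * θ ^ 2 / ((a i) ^ 2 + 2 * θ) ^ 2) := by
  refine Summable.of_nonneg_of_le (fun i => by positivity) (fun i => ?_)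
    (hasum.mul_left (θ / 4))
  have h := hapos i
  have h2 : (θ/4) * (1 / (a i) ^ 2) = θ / (4 * (a i)^2) := by
    field_simp
  rw [h2, div_le_div_iff₀ (by positivity) (by positivity)]
  nlinarith [sq_nonneg ((a i)^2 - 2*θ), sq_nonneg (a i), hθ.le]

private lemma psiratio_S_pos {a : ℕ → ℝ} (hapos : ∀ i, 0 < a i)
    (hasum : Summable (fun i => 1 / (a i) ^ 2)) {θ : ℝ} (hθ : 0 < θ) :
    0 < ∑' i, 2 * θ ^ 2 / ((a i) ^ 2 + 2 * θ) ^ 2 := by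
  refine Summable.tsum_pos (psiratio_sumS hapos hasum hθ) (fun i => by positivity) 0 ?_
  have := hapos 0; positivity

private lemma psiratio_mu_pos {a : ℕ → ℝ} (hapos : ∀ i, 0 < a i)
    (hasum : Summable (fun i => 1 / (a i) ^ 2)) {θ : ℝ} (hθ : 0 < θ) :
    0 < ∑' i, 1 / ((a i) ^ 2 + 2 * θ) := by
  refine Summable.tsum_pos (psiratio_sumMu hapos hasum hθ) (fun i => by positivity) 0 ?_
  have := hapos 0; positivity

private lemma psiratio_S_mono {a : ℕ → ℝ} (hapos : ∀ i, 0 < a i)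
    (hasum : Summable (fun i => 1 / (a i) ^ 2))
    {u v : ℝ} (hu : 0 < u) (huv : u ≤ v) :
    (∑' i, 2 * u ^ 2 / ((a i) ^ 2 + 2 * u) ^ 2) ≤
      ∑' i, 2 * v ^ 2 / ((a i) ^ 2 + 2 * v) ^ 2 := by
  have hv : 0 < v := hu.trans_le huv
  refine Summable.tsum_le_tsum (fun i => ?_) (psiratio_sumS hapos hasum hu)
    (psiratio_sumS hapos hasum hv)
  have hp := hapos i
  rw [div_le_div_iff₀ (by positivity) (by positivity)]
  nlinarith [sq_nonneg (a i), mul_nonneg (mul_nonneg (sub_nonneg.2 huv) (sq_nonneg (a i)))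
    (mul_pos hu hv).le, mul_nonneg (mul_nonneg (sub_nonneg.2 huv) (sq_nonneg (a i)))
    (sq_nonneg (a i)), mul_pos hu hv]

private lemma psiratio_S_scale {a : ℕ → ℝ} (hapos : ∀ i, 0 < a i)
    (hasum : Summable (fun i => 1 / (a i) ^ 2))
    {u v : ℝ} (hu : 0 < u) (huv : u ≤ v) :
    (∑' i, 2 * v ^ 2 / ((a i) ^ 2 + 2 * v) ^ 2) ≤
      (v/u)^2 * ∑' i, 2 * u ^ 2 / ((a i) ^ 2 + 2 * u) ^ 2 := by
  have hv : 0 < v := hu.trans_le huv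
  rw [← tsum_mul_left]
  refine Summable.tsum_le_tsum (fun i => ?_) (psiratio_sumS hapos hasum hv)
    ((psiratio_sumS hapos hasum hu).mul_left _)
  have hp := hapos i
  have h2 : (v/u)^2 * (2 * u ^ 2 / ((a i) ^ 2 + 2 * u) ^ 2)
      = 2 * v ^ 2 / ((a i) ^ 2 + 2 * u) ^ 2 := by
    field_simp
  rw [h2]
  gcongr

private lemma psiratio_gap_a {a : ℕ → ℝ} (hapos : ∀ i, 0 < a i)
    (hasum : Summable (fun i => 1 / (a i) ^ 2))
    {u v : ℝ} (hu : 0 < u) (huv : u ≤ v) :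
    (v - u) * (∑' i, 2 * v ^ 2 / ((a i) ^ 2 + 2 * v) ^ 2) / v ^ 2 ≤
      (∑' i, 1 / ((a i) ^ 2 + 2 * u)) - ∑' i, 1 / ((a i) ^ 2 + 2 * v) := by
  have hv : 0 < v := hu.trans_le huv
  rw [← Summable.tsum_sub (psiratio_sumMu hapos hasum hu) (psiratio_sumMu hapos hasum hv)]
  have e0 : (v - u) * (∑' i, 2 * v ^ 2 / ((a i) ^ 2 + 2 * v) ^ 2) / v ^ 2
      = ∑' i, ((v-u)/v^2) * (2 * v ^ 2 / ((a i) ^ 2 + 2 * v) ^ 2) := by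
    rw [tsum_mul_left]; ring
  rw [e0]
  refine Summable.tsum_le_tsum (fun i => ?_) ((psiratio_sumS hapos hasum hv).mul_left _)
    ((psiratio_sumMu hapos hasum hu).sub (psiratio_sumMu hapos hasum hv))
  have hp := hapos i
  have hpu : (0:ℝ) < (a i)^2 + 2*u := by positivity
  have hpv : (0:ℝ) < (a i)^2 + 2*v := by positivity
  have e1 : 1 / ((a i) ^ 2 + 2 * u) - 1 / ((a i) ^ 2 + 2 * v)
      = 2*(v-u) / (((a i) ^ 2 + 2 * u) * ((a i) ^ 2 + 2 * v)) := by
    field_simp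
    ring
  have e2 : ((v-u)/v^2) * (2 * v ^ 2 / ((a i) ^ 2 + 2 * v) ^ 2)
      = 2*(v-u) / (((a i) ^ 2 + 2 * v) * ((a i) ^ 2 + 2 * v)) := by
    field_simp
  rw [e1, e2]
  gcongr <;> linarith [sub_nonneg.2 huv]

private lemma psiratio_gap_b {a : ℕ → ℝ} (hapos : ∀ i, 0 < a i)
    (hasum : Summable (fun i => 1 / (a i) ^ 2))
    {u v : ℝ} (hu : 0 < u) (huv : u ≤ v) :
    (v - u) * (∑' i, 2 * u ^ 2 / ((a i) ^ 2 + 2 * u) ^ 2) / (u * v) ≤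
      (∑' i, 1 / ((a i) ^ 2 + 2 * u)) - ∑' i, 1 / ((a i) ^ 2 + 2 * v) := by
  have hv : 0 < v := hu.trans_le huv
  rw [← Summable.tsum_sub (psiratio_sumMu hapos hasum hu) (psiratio_sumMu hapos hasum hv)]
  have e0 : (v - u) * (∑' i, 2 * u ^ 2 / ((a i) ^ 2 + 2 * u) ^ 2) / (u * v)
      = ∑' i, ((v-u)/(u*v)) * (2 * u ^ 2 / ((a i) ^ 2 + 2 * u) ^ 2) := by
    rw [tsum_mul_left]; ring
  rw [e0]
  refine Summable.tsum_le_tsum (fun i => ?_) ((psiratio_sumS hapos hasum hu).mul_left _)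
    ((psiratio_sumMu hapos hasum hu).sub (psiratio_sumMu hapos hasum hv))
  have hp := hapos i
  have hpu : (0:ℝ) < (a i)^2 + 2*u := by positivity
  have hpv : (0:ℝ) < (a i)^2 + 2*v := by positivity
  have e1 : 1 / ((a i) ^ 2 + 2 * u) - 1 / ((a i) ^ 2 + 2 * v)
      = 2*(v-u) / (((a i) ^ 2 + 2 * u) * ((a i) ^ 2 + 2 * v)) := by
    field_simp
    ring
  have e2 : ((v-u)/(u*v)) * (2 * u ^ 2 / ((a i) ^ 2 + 2 * u) ^ 2)
      = 2*(v-u)*u / (v * ((a i) ^ 2 + 2 * u) ^ 2) := by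
    field_simp
  rw [e1, e2, div_le_div_iff₀ (by positivity) (by positivity)]
  nlinarith [mul_nonneg (mul_nonneg (sq_nonneg (v-u)) (sq_nonneg (a i))) hpu.le,
    sq_nonneg (v-u), sq_nonneg (a i)]

private lemma psiratio_mu_lt {a : ℕ → ℝ} (hapos : ∀ i, 0 < a i)
    (hasum : Summable (fun i => 1 / (a i) ^ 2))
    {u v : ℝ} (hu : 0 < u) (huv : u < v) :
    (∑' i, 1 / ((a i) ^ 2 + 2 * v)) < ∑' i, 1 / ((a i) ^ 2 + 2 * u) := by
  have hv : 0 < v := hu.trans huv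
  have h0 := psiratio_gap_a hapos hasum hu huv.le
  have h1 : 0 < (v - u) * (∑' i, 2 * v ^ 2 / ((a i) ^ 2 + 2 * v) ^ 2) / v ^ 2 := by
    have := psiratio_S_pos hapos hasum hv
    have h2 : 0 < v - u := by linarith
    positivity
  linarith

private lemma psiratio_S_atTop {a : ℕ → ℝ} (hapos : ∀ i, 0 < a i)
    (hamono : Monotone a) (hasum : Summable (fun i => 1 / (a i) ^ 2)) :
    Tendsto (fun θ : ℝ => ∑' i, 2 * θ ^ 2 / ((a i) ^ 2 + 2 * θ) ^ 2) atTop atTop := by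
  rw [tendsto_atTop]
  intro C
  set n : ℕ := ⌈9 * C / 2⌉₊ with hn
  filter_upwards [eventually_ge_atTop (max 1 ((a n) ^ 2))] with θ hθbig
  have hθ1 : (1:ℝ) ≤ θ := le_trans (le_max_left _ _) hθbig
  have hθ : 0 < θ := lt_of_lt_of_le one_pos hθ1
  have han : (a n) ^ 2 ≤ θ := le_trans (le_max_right _ _) hθbig
  have step1 : C ≤ (n:ℝ) * (2/9) := by
    have := Nat.le_ceil (9 * C / 2)
    rw [← hn] at this
    linarith
  have step2 : (n:ℝ) * (2/9) ≤ ∑ i ∈ Finset.range n, 2 * θ ^ 2 / ((a i) ^ 2 + 2 * θ) ^ 2 := by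
    have := Finset.card_nsmul_le_sum (Finset.range n)
      (fun i => 2 * θ ^ 2 / ((a i) ^ 2 + 2 * θ) ^ 2) (2/9) ?_
    · simpa [nsmul_eq_mul] using this
    · intro i hi
      have hin : i ≤ n := le_of_lt (Finset.mem_range.mp hi)
      have hai : (a i) ^ 2 ≤ θ := by
        refine le_trans ?_ han
        have := hamono hin
        have h0 := (hapos i).le
        nlinarith
      have hp := hapos i
      show (2:ℝ)/9 ≤ 2 * θ ^ 2 / ((a i) ^ 2 + 2 * θ) ^ 2
      have e : (2:ℝ)/9 = 2 * θ^2 / (9 * θ^2) := by field_simp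
      rw [e]
      gcongr 2 * θ^2 / ?_
      nlinarith
  have step3 : (∑ i ∈ Finset.range n, 2 * θ ^ 2 / ((a i) ^ 2 + 2 * θ) ^ 2) ≤
      ∑' i, 2 * θ ^ 2 / ((a i) ^ 2 + 2 * θ) ^ 2 := by
    refine Summable.sum_le_tsum _ (fun i _ => by positivity) (psiratio_sumS hapos hasum hθ)
  linarith

private lemma psiratio_G_atTop {a : ℕ → ℝ} (hapos : ∀ i, 0 < a i)
    (hamono : Monotone a) (hasum : Summable (fun i => 1 / (a i) ^ 2)) :
    Tendsto (fun θ : ℝ => θ * ∑' i, 1 / ((a i) ^ 2 + 2 * θ)) atTop atTop := by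
  rw [tendsto_atTop]
  intro C
  set n : ℕ := ⌈3 * C⌉₊ with hn
  filter_upwards [eventually_ge_atTop (max 1 ((a n) ^ 2))] with θ hθbig
  have hθ1 : (1:ℝ) ≤ θ := le_trans (le_max_left _ _) hθbig
  have hθ : 0 < θ := lt_of_lt_of_le one_pos hθ1
  have han : (a n) ^ 2 ≤ θ := le_trans (le_max_right _ _) hθbig
  have e0 : θ * (∑' i, 1 / ((a i) ^ 2 + 2 * θ)) = ∑' i, θ / ((a i) ^ 2 + 2 * θ) := by
    rw [← tsum_mul_left]
    exact tsum_congr fun i => by rw [mul_one_div]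
  show C ≤ θ * ∑' i, 1 / ((a i) ^ 2 + 2 * θ)
  rw [e0]
  have hsum' : Summable (fun i => θ / ((a i) ^ 2 + 2 * θ)) := by
    have := (psiratio_sumMu hapos hasum hθ).mul_left θ
    simpa [mul_one_div, div_eq_mul_inv] using this
  have step1 : C ≤ (n:ℝ) * (1/3) := by
    have := Nat.le_ceil (3 * C)
    rw [← hn] at this
    linarith
  have step2 : (n:ℝ) * (1/3) ≤ ∑ i ∈ Finset.range n, θ / ((a i) ^ 2 + 2 * θ) := by
    have := Finset.card_nsmul_le_sum (Finset.range n)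
      (fun i => θ / ((a i) ^ 2 + 2 * θ)) (1/3) ?_
    · simpa [nsmul_eq_mul] using this
    · intro i hi
      have hin : i ≤ n := le_of_lt (Finset.mem_range.mp hi)
      have hai : (a i) ^ 2 ≤ θ := by
        refine le_trans ?_ han
        have := hamono hin
        have h0 := (hapos i).le
        nlinarith
      have hp := hapos i
      show (1:ℝ)/3 ≤ θ / ((a i) ^ 2 + 2 * θ)
      have e : (1:ℝ)/3 = θ / (3 * θ) := by field_simp
      rw [e]
      gcongr θ / ?_
      linarith
  have step3 : (∑ i ∈ Finset.range n, θ / ((a i) ^ 2 + 2 * θ)) ≤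
      ∑' i, θ / ((a i) ^ 2 + 2 * θ) := by
    refine Summable.sum_le_tsum _ (fun i _ => by positivity) hsum'
  linarith

/-- Let `(aᵢ)` be nondecreasing positive with `Σᵢ 1/aᵢ² < ∞`,
`μ θ = Σᵢ 1/(aᵢ²+2θ)`, `ψ θ = √(Σᵢ 2θ²/(aᵢ²+2θ)²)`, `μ⁻¹` the inverse of `μ`
(defined near `0⁺`) and `ρ s = 1/μ⁻¹ s`.  Then for every `x ∈ ℝ`,
`ψ (μ⁻¹ s) / ψ (μ⁻¹ (s + x * ρ s)) → 1` as `s → 0⁺`. -/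
theorem psi_ratio_tendsto_one (a : ℕ → ℝ) (hapos : ∀ i, 0 < a i)
    (hamono : Monotone a) (hasum : Summable (fun i => 1 / (a i) ^ 2))
    (μ ψ μInv : ℝ → ℝ)
    (hμ : ∀ θ : ℝ, μ θ = ∑' i : ℕ, 1 / ((a i) ^ 2 + 2 * θ))
    (hψ : ∀ θ : ℝ, ψ θ = Real.sqrt (∑' i : ℕ, 2 * θ ^ 2 / ((a i) ^ 2 + 2 * θ) ^ 2))
    (hμInv : ∀ᶠ s in nhdsWithin (0 : ℝ) (Set.Ioi 0), 0 < μInv s ∧ μ (μInv s) = s) :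
    ∀ x : ℝ,
      Tendsto (fun s => ψ (μInv s) / ψ (μInv (s + x * (1 / μInv s))))
        (nhdsWithin 0 (Set.Ioi 0)) (nhds 1) := by
  intro x
  obtain ⟨δ, hδmem, hsub⟩ := mem_nhdsGT_iff_exists_Ioo_subset.mp hμInv
  have hδ : (0:ℝ) < δ := hδmem
  -- μ is strictly decreasing on positives
  have hμanti : ∀ u v : ℝ, 0 < u → u < v → μ v < μ u := by
    intro u v hu huv
    rw [hμ u, hμ v]
    exact psiratio_mu_lt hapos hasum hu huv
  -- μInv tends to infinity
  have hΘ : Tendsto μInv (nhdsWithin (0:ℝ) (Set.Ioi 0)) atTop := by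
    rw [tendsto_atTop]
    intro M
    set M' := max M 1 with hM'
    have hM'pos : (0:ℝ) < M' := lt_of_lt_of_le one_pos (le_max_right _ _)
    have hμM' : 0 < μ M' := by
      rw [hμ]; exact psiratio_mu_pos hapos hasum hM'pos
    have hmin : (0:ℝ) < min δ (μ M') := lt_min hδ hμM'
    filter_upwards [Ioo_mem_nhdsGT_of_mem (⟨le_refl 0, hmin⟩ : (0:ℝ) ∈ Ico 0 (min δ (μ M')))]
      with s hs
    have hs0 : 0 < s := hs.1
    have hsδ : s < δ := lt_of_lt_of_le hs.2 (min_le_left _ _)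
    have hsM : s < μ M' := lt_of_lt_of_le hs.2 (min_le_right _ _)
    obtain ⟨hinv0, hinveq⟩ := hsub ⟨hs0, hsδ⟩
    refine le_trans (le_max_left M 1) ?_
    by_contra h
    push_neg at h
    have := hμanti _ _ hinv0 h
    rw [hinveq] at this
    linarith
  have hT : Tendsto (fun s => ∑' i, 2 * (μInv s) ^ 2 / ((a i) ^ 2 + 2 * μInv s) ^ 2)
      (nhdsWithin (0:ℝ) (Set.Ioi 0)) atTop :=
    (psiratio_S_atTop hapos hamono hasum).comp hΘ
  have hG : Tendsto (fun s => s * μInv s) (nhdsWithin (0:ℝ) (Set.Ioi 0)) atTop := by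
    refine Tendsto.congr' ?_ (((psiratio_G_atTop hapos hamono hasum).comp hΘ))
    filter_upwards [Ioo_mem_nhdsGT_of_mem (⟨le_refl 0, hδ⟩ : (0:ℝ) ∈ Ico 0 δ)] with s hs
    obtain ⟨h0, heq⟩ := hsub hs
    show μInv s * (∑' i, 1 / ((a i) ^ 2 + 2 * μInv s)) = s * μInv s
    rw [← hμ, heq]
    ring
  have hxT0 : Tendsto (fun s => |x| / ∑' i, 2 * (μInv s) ^ 2 / ((a i) ^ 2 + 2 * μInv s) ^ 2)
      (nhdsWithin (0:ℝ) (Set.Ioi 0)) (nhds 0) :=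
    tendsto_const_nhds.div_atTop hT
  have hL : Tendsto (fun s => 1 - |x| / ∑' i, 2 * (μInv s) ^ 2 / ((a i) ^ 2 + 2 * μInv s) ^ 2)
      (nhdsWithin (0:ℝ) (Set.Ioi 0)) (nhds 1) := by
    simpa using tendsto_const_nhds.sub hxT0
  have hU : Tendsto
      (fun s => (1 - |x| / ∑' i, 2 * (μInv s) ^ 2 / ((a i) ^ 2 + 2 * μInv s) ^ 2)⁻¹)
      (nhdsWithin (0:ℝ) (Set.Ioi 0)) (nhds 1) := by
    simpa using hL.inv₀ one_ne_zero
  have hmain : ∀ᶠ s in nhdsWithin (0:ℝ) (Set.Ioi 0),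
      (1 - |x| / ∑' i, 2 * (μInv s) ^ 2 / ((a i) ^ 2 + 2 * μInv s) ^ 2) ≤
        ψ (μInv s) / ψ (μInv (s + x * (1 / μInv s))) ∧
      ψ (μInv s) / ψ (μInv (s + x * (1 / μInv s))) ≤
        (1 - |x| / ∑' i, 2 * (μInv s) ^ 2 / ((a i) ^ 2 + 2 * μInv s) ^ 2)⁻¹ := by
    filter_upwards [Ioo_mem_nhdsGT_of_mem (⟨le_refl 0, half_pos hδ⟩ : (0:ℝ) ∈ Ico 0 (δ/2)),
      hG.eventually_ge_atTop (2 * |x|),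
      hT.eventually_ge_atTop (2 * |x|)] with s hs hG2 hT2
    have hs0 : 0 < s := hs.1
    have hsδ2 : s < δ/2 := hs.2
    obtain ⟨hθ0, hθeq⟩ := hsub ⟨hs0, by linarith⟩
    set θ : ℝ := μInv s with hθdef
    set T : ℝ := ∑' i, 2 * θ ^ 2 / ((a i) ^ 2 + 2 * θ) ^ 2 with hTdef
    have hTpos : 0 < T := psiratio_S_pos hapos hasum hθ0
    have hxT : |x| / T ≤ 1/2 := by
      rw [div_le_iff₀ hTpos]
      linarith
    have hLpos : 0 < 1 - |x| / T := by linarith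
    have hL1 : 1 - |x| / T ≤ 1 := by
      have : 0 ≤ |x| / T := by positivity
      linarith
    have hU1 : 1 ≤ (1 - |x| / T)⁻¹ := by
      rw [le_inv_comm₀ one_pos hLpos]
      simpa using hL1
    -- bound on the perturbation
    have habs : |x * (1/θ)| ≤ s/2 := by
      rw [abs_mul, abs_of_pos (show (0:ℝ) < 1/θ by positivity), mul_one_div, div_le_iff₀ hθ0]
      calc |x| ≤ s * θ / 2 := by linarith
        _ = s/2 * θ := by ring
    have hs'pos : 0 < s + x * (1/θ) := by
      have := neg_abs_le (x * (1/θ))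
      linarith
    have hs'δ : s + x * (1/θ) < δ := by
      have := le_abs_self (x * (1/θ))
      linarith
    obtain ⟨hθ'0, hθ'eq⟩ := hsub ⟨hs'pos, hs'δ⟩
    set θ' : ℝ := μInv (s + x * (1/θ)) with hθ'def
    -- ψ values
    have hψθ : ψ θ = Real.sqrt T := hψ θ
    have hψθ' : ψ θ' = Real.sqrt (∑' i, 2 * θ' ^ 2 / ((a i) ^ 2 + 2 * θ') ^ 2) := hψ θ'
    have hψθpos : 0 < ψ θ := by
      rw [hψθ]; exact Real.sqrt_pos.2 hTpos
    have hψθ'pos : 0 < ψ θ' := by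
      rw [hψθ']; exact Real.sqrt_pos.2 (psiratio_S_pos hapos hasum hθ'0)
    rcases le_or_gt 0 x with hx | hx
    · -- x ≥ 0 : θ' ≤ θ
      have hxabs : |x| = x := abs_of_nonneg hx
      have hss' : s ≤ s + x * (1/θ) := by
        have : 0 ≤ x * (1/θ) := by positivity
        linarith
      have hθ'le : θ' ≤ θ := by
        by_contra h
        push_neg at h
        have := hμanti _ _ hθ0 h
        rw [hθeq, hθ'eq] at this
        linarith
      -- gap estimate
      have hgap := psiratio_gap_a hapos hasum hθ'0 hθ'le
      rw [← hμ θ', ← hμ θ, hθeq, hθ'eq] at hgap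
      -- hgap : (θ - θ') * T / θ^2 ≤ (s + x*(1/θ)) - s
      have h2 : (θ - θ') * T ≤ x * θ := by
        have h3 := (div_le_iff₀ (show (0:ℝ) < θ^2 by positivity)).1 hgap
        have e : (s + x * (1/θ) - s) * θ^2 = x * θ := by
          field_simp
          ring
        linarith [e ▸ h3]
      have hlow : (1 - |x| / T) * θ ≤ θ' := by
        rw [hxabs]
        have h4 : θ - θ' ≤ x / T * θ := by
          rw [div_mul_eq_mul_div, le_div_iff₀ hTpos]
          linarith
        have e : (1 - x / T) * θ = θ - x / T * θ := by ring
        linarith [e ▸ le_refl ((1 - x / T) * θ)]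
      -- lower bound : ratio ≥ 1 ≥ L
      have hψmono : ψ θ' ≤ ψ θ := by
        rw [hψθ, hψθ']
        exact Real.sqrt_le_sqrt (psiratio_S_mono hapos hasum hθ'0 hθ'le)
      have hlower : 1 - |x| / T ≤ ψ θ / ψ θ' := by
        refine le_trans hL1 ?_
        rw [le_div_iff₀ hψθ'pos, one_mul]
        exact hψmono
      -- upper bound : ratio ≤ θ/θ' ≤ L⁻¹
      have hscale := psiratio_S_scale hapos hasum hθ'0 hθ'le
      have hψscale : ψ θ ≤ (θ/θ') * ψ θ' := by
        rw [hψθ, hψθ']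
        have h5 := Real.sqrt_le_sqrt hscale
        rwa [Real.sqrt_mul (by positivity) _, Real.sqrt_sq (by positivity)] at h5
      have hupper : ψ θ / ψ θ' ≤ (1 - |x| / T)⁻¹ := by
        have h6 : ψ θ / ψ θ' ≤ θ / θ' := by
          rw [div_le_div_iff₀ hψθ'pos hθ'0]
          calc ψ θ * θ' ≤ ((θ/θ') * ψ θ') * θ' := by
                exact mul_le_mul_of_nonneg_right hψscale hθ'0.le
            _ = θ * ψ θ' := by field_simp
        refine le_trans h6 ?_
        rw [div_le_iff₀ hθ'0, inv_mul_eq_div, le_div_iff₀ hLpos]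
        calc θ * (1 - |x| / T) = (1 - |x| / T) * θ := by ring
          _ ≤ θ' := hlow
      exact ⟨hlower, hupper⟩
    · -- x < 0 : θ ≤ θ'
      have hxabs : |x| = -x := abs_of_neg hx
      have hss' : s + x * (1/θ) < s := by
        have h7 : x * (1/θ) < 0 := mul_neg_of_neg_of_pos hx (by positivity)
        linarith
      have hθle : θ ≤ θ' := by
        by_contra h
        push_neg at h
        have := hμanti _ _ hθ'0 h
        rw [hθeq, hθ'eq] at this
        linarith
      -- gap estimate (b) with u = θ, v = θ'
      have hgap := psiratio_gap_b hapos hasum hθ0 hθle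
      rw [← hμ θ', ← hμ θ, hθeq, hθ'eq] at hgap
      -- hgap : (θ' - θ) * T / (θ*θ') ≤ s - (s + x*(1/θ))
      have h2 : (θ' - θ) * T ≤ -x * θ' := by
        have h3 := (div_le_iff₀ (show (0:ℝ) < θ*θ' by positivity)).1 hgap
        have e : (s - (s + x * (1/θ))) * (θ*θ') = -x * θ' := by
          field_simp
          ring
        linarith [e ▸ h3]
      have hlow : (1 - |x| / T) * θ' ≤ θ := by
        rw [hxabs]
        have h4 : θ' - θ ≤ -x / T * θ' := by
          rw [div_mul_eq_mul_div, le_div_iff₀ hTpos]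
          linarith
        have e : (1 - -x / T) * θ' = θ' - -x / T * θ' := by ring
        linarith [e ▸ le_refl ((1 - -x / T) * θ')]
      -- upper bound : ratio ≤ 1 ≤ U
      have hψmono : ψ θ ≤ ψ θ' := by
        rw [hψθ, hψθ']
        exact Real.sqrt_le_sqrt (psiratio_S_mono hapos hasum hθ0 hθle)
      have hupper : ψ θ / ψ θ' ≤ (1 - |x| / T)⁻¹ := by
        refine le_trans ?_ hU1
        rw [div_le_one hψθ'pos]
        exact hψmono
      -- lower bound : ratio ≥ θ/θ' ≥ L
      have hscale := psiratio_S_scale hapos hasum hθ0 hθle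
      have hψscale : ψ θ' ≤ (θ'/θ) * ψ θ := by
        rw [hψθ, hψθ']
        have h5 := Real.sqrt_le_sqrt hscale
        rwa [Real.sqrt_mul (by positivity) _, Real.sqrt_sq (by positivity)] at h5
      have hlower : 1 - |x| / T ≤ ψ θ / ψ θ' := by
        have h6 : θ / θ' ≤ ψ θ / ψ θ' := by
          rw [div_le_div_iff₀ (hθ0.trans_le hθle) hψθ'pos]
          calc θ * ψ θ' ≤ θ * ((θ'/θ) * ψ θ) := by
                exact mul_le_mul_of_nonneg_left hψscale hθ0.le
            _ = ψ θ * θ' := by field_simp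
        refine le_trans ?_ h6
        rw [le_div_iff₀ (hθ0.trans_le hθle)]
        exact hlow
      exact ⟨hlower, hupper⟩
  exact tendsto_of_tendsto_of_tendsto_of_le_of_le' hL hU
    (hmain.mono fun s h => h.1) (hmain.mono fun s h => h.2)
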